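/- Let ν ≠ 0, k ≠ 0, and A⁰₁ = diag(0,−ν), A¹₀ = [[−α, k],[α(γ−α)/k, α−γ]]. Define C⁰ to be the space of pairs (C₁, C₀) of 2×2 matrices with A⁰₁C₁ = C₁A⁰₁ and A⁰₁C₀ − C₀A⁰₁ + A⁰₀C₁ − C₁A⁰₀ = 0 where A⁰₀ = −A¹₀, and C¹ = Z(A¹₀) the centralizer of A¹₀. Then dim C⁰ = 4, dim C¹ = 2, and the index of rigidity idx(A) = dim C⁰ + dim C¹ − 2·2² equals 2. -/

import Mathlib

open Matrix

/-- The centralizer `Z(X) = {Y | XY = YX}` as a submodule of matrices. -/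
noncomputable def matrixCentralizer {m : Type*} [Fintype m] (X : Matrix m m ℂ) :
    Submodule ℂ (Matrix m m ℂ) where
  carrier := {Y | X * Y = Y * X}
  add_mem' := by
    intro a b ha hb
    simp only [Set.mem_setOf_eq] at *
    rw [mul_add, add_mul, ha, hb]
  zero_mem' := by simp
  smul_mem' := by
    intro c a ha
    simp only [Set.mem_setOf_eq] at *
    rw [Matrix.mul_smul, Matrix.smul_mul, ha]

lemma mem_matrixCentralizer {m : Type*} [Fintype m] (X Y : Matrix m m ℂ) :
    Y ∈ matrixCentralizer X ↔ X * Y = Y * X := Iff.rfl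

/-- Auxiliary linear map whose kernel is the centralizer of `A¹₀`. -/
noncomputable def Lcent (γ α k : ℂ) : Matrix (Fin 2) (Fin 2) ℂ →ₗ[ℂ] (Fin 2 → ℂ) where
  toFun Y := ![k * Y 1 0 - (α * (γ - α) / k) * Y 0 1,
    k * (Y 1 1 - Y 0 0) + Y 0 1 * (γ - 2 * α)]
  map_add' := by
    intro Y Z
    funext i
    fin_cases i <;> simp [Matrix.add_apply] <;> ring
  map_smul' := by
    intro c Y
    funext i
    fin_cases i <;> simp [Matrix.smul_apply] <;> ring

lemma centralizer_eq_ker (γ α k : ℂ) (hk : k ≠ 0) :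
    matrixCentralizer !![-α, k; α * (γ - α) / k, α - γ] = LinearMap.ker (Lcent γ α k) := by
  ext Y
  rw [mem_matrixCentralizer, LinearMap.mem_ker]
  constructor
  · intro h
    have h00 := congrFun (congrFun h 0) 0
    have h01 := congrFun (congrFun h 0) 1
    simp [Matrix.mul_apply, Fin.sum_univ_two] at h00 h01
    funext i
    fin_cases i <;> simp [Lcent]
    · linear_combination h00
    · linear_combination h01
  · intro h
    have h0 := congrFun h 0
    have h1 := congrFun h 1
    simp [Lcent] at h0 h1
    ext i j
    fin_cases i <;> fin_cases j <;> simp [Matrix.mul_apply, Fin.sum_univ_two]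
    · linear_combination h0
    · linear_combination h1
    · have hG : k * ((α * (γ - α) / k) * Y 0 0 + (α - γ) * Y 1 0
          - (Y 1 0 * (-α) + Y 1 1 * (α * (γ - α) / k))) = 0 := by
        linear_combination (2 * α - γ) * h0 + (-(α * (γ - α) / k)) * h1
      have := (mul_eq_zero.mp hG).resolve_left hk
      linear_combination this
    · linear_combination -h0

lemma Lcent_surjective (γ α k : ℂ) (hk : k ≠ 0) :
    Function.Surjective (Lcent γ α k) := by
  intro t
  refine ⟨!![0, 0; t 0 / k, t 1 / k], ?_⟩
  funext i
  fin_cases i <;> simp [Lcent] <;> field_simp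

/-- Auxiliary linear map whose kernel is `C⁰`. -/
noncomputable def Lfour (ν γ α k : ℂ) :
    (Matrix (Fin 2) (Fin 2) ℂ × Matrix (Fin 2) (Fin 2) ℂ) →ₗ[ℂ] (Fin 4 → ℂ) where
  toFun p := ![p.1 0 1, p.1 1 0,
    ν * p.2 0 1 + k * (p.1 0 0 - p.1 1 1) + p.1 0 1 * (2 * α - γ),
    -ν * p.2 1 0 + (α * (γ - α) / k) * (p.1 1 1 - p.1 0 0) + p.1 1 0 * (γ - 2 * α)]
  map_add' := by
    intro Y Z
    funext i
    fin_cases i <;> simp [Matrix.add_apply] <;> ring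
  map_smul' := by
    intro c Y
    funext i
    fin_cases i <;> simp [Matrix.smul_apply] <;> ring

lemma Lfour_surjective (ν γ α k : ℂ) (hν : ν ≠ 0) :
    Function.Surjective (Lfour ν γ α k) := by
  intro t
  refine ⟨(!![0, t 0; t 1, 0],
    !![0, (t 2 - t 0 * (2 * α - γ)) / ν; (t 1 * (γ - 2 * α) - t 3) / ν, 0]), ?_⟩
  funext i
  fin_cases i <;> simp [Lfour] <;> field_simp <;> ring

/-- Index of rigidity of the confluent hypergeometric system:
`dim C⁰ = 4`, `dim C¹ = 2`, and `idx = dim C⁰ + dim C¹ − (M−1)n² = 2`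
(with `M = 2`, `n = 2`). -/
theorem chg_index_of_rigidity (ν γ α k : ℂ) (hν : ν ≠ 0) (hk : k ≠ 0)
    (A01 A10 A00 : Matrix (Fin 2) (Fin 2) ℂ)
    (hA01 : A01 = !![0, 0; 0, -ν])
    (hA10 : A10 = !![-α, k; α * (γ - α) / k, α - γ])
    (hA00 : A00 = -A10)
    (C0 : Submodule ℂ (Matrix (Fin 2) (Fin 2) ℂ × Matrix (Fin 2) (Fin 2) ℂ))
    (hC0 : (C0 : Set (Matrix (Fin 2) (Fin 2) ℂ × Matrix (Fin 2) (Fin 2) ℂ)) =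
      {p : Matrix (Fin 2) (Fin 2) ℂ × Matrix (Fin 2) (Fin 2) ℂ |
        A01 * p.1 = p.1 * A01 ∧ A01 * p.2 - p.2 * A01 + A00 * p.1 - p.1 * A00 = 0}) :
    Module.finrank ℂ C0 = 4 ∧
      Module.finrank ℂ (matrixCentralizer A10) = 2 ∧
      (Module.finrank ℂ C0 : ℤ) + (Module.finrank ℂ (matrixCentralizer A10) : ℤ)
        - (2 - 1) * 2 ^ 2 = 2 := by
  subst hA10 hA01 hA00
  -- dimensions of ambient spaces
  have hdM : Module.finrank ℂ (Matrix (Fin 2) (Fin 2) ℂ) = 4 := by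
    simp [Module.finrank_matrix]
  have hdP : Module.finrank ℂ
      (Matrix (Fin 2) (Fin 2) ℂ × Matrix (Fin 2) (Fin 2) ℂ) = 8 := by
    rw [Module.finrank_prod, hdM]
  -- the centralizer has dimension 2
  have hcent : Module.finrank ℂ
      (matrixCentralizer !![-α, k; α * (γ - α) / k, α - γ]) = 2 := by
    rw [centralizer_eq_ker γ α k hk]
    have h := LinearMap.finrank_range_add_finrank_ker (Lcent γ α k)
    rw [LinearMap.range_eq_top.mpr (Lcent_surjective γ α k hk), finrank_top,
      hdM] at h
    have h2 : Module.finrank ℂ (Fin 2 → ℂ) = 2 := by simp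
    omega
  -- C0 equals the kernel of `Lfour`
  have hC0ker : C0 = LinearMap.ker (Lfour ν γ α k) := by
    ext p
    have hmem : p ∈ C0 ↔ !![0, 0; 0, -ν] * p.1 = p.1 * !![0, 0; 0, -ν] ∧
        !![0, 0; 0, -ν] * p.2 - p.2 * !![0, 0; 0, -ν] +
          -(!![-α, k; α * (γ - α) / k, α - γ]) * p.1 -
          p.1 * -(!![-α, k; α * (γ - α) / k, α - γ]) = 0 := by
      rw [← SetLike.mem_coe, hC0]; rfl
    rw [hmem, LinearMap.mem_ker]
    constructor
    · rintro ⟨h1, h2⟩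
      have e01 := congrFun (congrFun h1 0) 1
      have e10 := congrFun (congrFun h1 1) 0
      simp [Matrix.mul_apply, Fin.sum_univ_two] at e01 e10
      have f01 := congrFun (congrFun h2 0) 1
      have f10 := congrFun (congrFun h2 1) 0
      simp [Matrix.mul_apply, Fin.sum_univ_two, Matrix.sub_apply, Matrix.vecMul,
        dotProduct, Matrix.add_apply, Matrix.neg_apply] at f01 f10
      have hb : p.1 0 1 = 0 := e01.resolve_right hν
      have hc : p.1 1 0 = 0 := e10.resolve_left hν
      funext i
      fin_cases i <;> simp [Lfour]
      · exact hb
      · exact hc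
      · linear_combination f01
      · linear_combination f10
    · intro h
      have c0 := congrFun h 0
      have c1 := congrFun h 1
      have c2 := congrFun h 2
      have c3 := congrFun h 3
      simp [Lfour] at c0 c1 c2 c3
      constructor
      · ext i j
        fin_cases i <;> fin_cases j <;>
          simp [Matrix.mul_apply, Fin.sum_univ_two, c0, c1, mul_comm]
      · ext i j
        fin_cases i <;> fin_cases j <;>
          simp [Matrix.mul_apply, Fin.sum_univ_two, Matrix.sub_apply, Matrix.vecMul,
            dotProduct, Matrix.add_apply, Matrix.neg_apply]
        · linear_combination (-k) * c1 + (α * (γ - α) / k) * c0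
        · linear_combination c2
        · linear_combination c3
        · linear_combination (-(α * (γ - α) / k)) * c0 + k * c1
  have hC0dim : Module.finrank ℂ C0 = 4 := by
    rw [hC0ker]
    have h := LinearMap.finrank_range_add_finrank_ker (Lfour ν γ α k)
    rw [LinearMap.range_eq_top.mpr (Lfour_surjective ν γ α k hν), finrank_top,
      hdP] at h
    have h4 : Module.finrank ℂ (Fin 4 → ℂ) = 4 := by simp
    omega
  refine ⟨hC0dim, hcent, ?_⟩
  rw [hC0dim, hcent]
  norm_num
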